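/- Let m ≥ 1, let p : Fin m → ℝ satisfy 0 ≤ p i ≤ 1 for all i, and let u : Fin m → EuclideanSpace ℝ (Fin d). Then Σ_{A ⊆ Fin m, A ≠ ∅} w_p(A) · (1/|A|) • Σ_{i ∈ A} u i = Σ_{i} p i · (1 + Σ_{j=2}^{m} (-1)^{j+1} (1/j) Σ_{S ⊆ Fin m \ {i}, |S| = j-1} ∏_{z ∈ S} p z) • u i, where the outer sum on the left ranges over all nonempty finite subsets A of Fin m. -/

import Mathlib

open Finset

private lemma altBinom (n : ℕ) :
    ∑ b ∈ range (n + 1), (n.choose b : ℝ) * ((-1) ^ (n - b) * (1 / ((b : ℝ) + 1))) =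
      (-1) ^ n * (1 / ((n : ℝ) + 1)) := by
  have step : ∀ b ∈ range (n + 1),
      (n.choose b : ℝ) * ((-1) ^ (n - b) * (1 / ((b : ℝ) + 1))) =
        ((-1) ^ n * (1 / ((n : ℝ) + 1))) * (-(-1) ^ (b + 1) * ((n + 1).choose (b + 1) : ℝ)) := by
    intro b hb
    rw [mem_range, Nat.lt_succ_iff] at hb
    have h1 : ((n : ℝ) + 1) * (n.choose b : ℝ) = ((n + 1).choose (b + 1) : ℝ) * ((b : ℝ) + 1) := by
      exact_mod_cast congrArg (Nat.cast (R := ℝ)) (Nat.add_one_mul_choose_eq n b)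
    have h2 : (-1 : ℝ) ^ (n - b) * (-1) ^ b = (-1) ^ n := by
      rw [← pow_add, Nat.sub_add_cancel hb]
    have h3 : (-1 : ℝ) ^ (n - b) = (-1) ^ n * (-1) ^ b := by
      have hb2 : ((-1 : ℝ) ^ b) * ((-1 : ℝ) ^ b) = 1 := by
        rw [← pow_add, ← two_mul, pow_mul]; norm_num
      calc (-1 : ℝ) ^ (n - b) = (-1 : ℝ) ^ (n - b) * (((-1) ^ b) * ((-1) ^ b)) := by
            rw [hb2, mul_one]
        _ = (-1) ^ n * (-1) ^ b := by rw [← mul_assoc, h2]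
    have hb1 : ((b : ℝ) + 1) ≠ 0 := by positivity
    have hn1 : ((n : ℝ) + 1) ≠ 0 := by positivity
    rw [h3, pow_succ]
    field_simp
    linear_combination h1
  rw [sum_congr rfl step, ← mul_sum]
  have h4 : ∑ b ∈ range (n + 1), (-(-1 : ℝ) ^ (b + 1) * ((n + 1).choose (b + 1) : ℝ)) = 1 := by
    have h5 : ∑ j ∈ range (n + 2), ((-1 : ℝ) ^ j * ((n + 1).choose j : ℝ)) = 0 := by
      have := Int.alternating_sum_range_choose_of_ne (Nat.succ_ne_zero n)
      exact_mod_cast this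
    rw [sum_range_succ'] at h5
    simp only [pow_zero, Nat.choose_zero_right, Nat.cast_one, mul_one] at h5
    have h6 : ∑ i ∈ range (n + 1), ((-1 : ℝ) ^ (i + 1) * ((n + 1).choose (i + 1) : ℝ)) = -1 := by
      linarith
    have h7 : ∑ b ∈ range (n + 1), (-(-1 : ℝ) ^ (b + 1) * ((n + 1).choose (b + 1) : ℝ))
        = -∑ b ∈ range (n + 1), ((-1 : ℝ) ^ (b + 1) * ((n + 1).choose (b + 1) : ℝ)) := by
      rw [← sum_neg_distrib]
      exact sum_congr rfl fun b _ => by ring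
    rw [h7, h6]; norm_num
  rw [h4, mul_one]

private lemma pairSwap {α M : Type*} [DecidableEq α] [AddCommMonoid M]
    (T : Finset α) (F : Finset α → Finset α → M) :
    ∑ B ∈ T.powerset, ∑ S ∈ (T \ B).powerset, F B S
      = ∑ C ∈ T.powerset, ∑ B ∈ C.powerset, F B (C \ B) := by
  rw [sum_sigma', sum_sigma']
  refine sum_nbij' (fun x => ⟨x.1 ∪ x.2, x.1⟩) (fun x => ⟨x.2, x.1 \ x.2⟩) ?_ ?_ ?_ ?_ ?_
  · rintro ⟨B, S⟩ h
    rw [mem_sigma, mem_powerset, mem_powerset] at h ⊢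
    obtain ⟨hB, hS⟩ := h
    exact ⟨union_subset hB ((subset_sdiff.mp hS).1), subset_union_left⟩
  · rintro ⟨C, B⟩ h
    rw [mem_sigma, mem_powerset, mem_powerset] at h ⊢
    obtain ⟨hC, hB⟩ := h
    exact ⟨hB.trans hC, sdiff_subset_sdiff hC (subset_refl B)⟩
  · rintro ⟨B, S⟩ h
    rw [mem_sigma, mem_powerset, mem_powerset] at h
    obtain ⟨hB, hS⟩ := h
    have hd : Disjoint B S := (subset_sdiff.mp hS).2.symm
    simp [union_sdiff_cancel_left hd]
  · rintro ⟨C, B⟩ h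
    rw [mem_sigma, mem_powerset, mem_powerset] at h
    obtain ⟨hC, hB⟩ := h
    simp [union_sdiff_of_subset hB]
  · rintro ⟨B, S⟩ h
    rw [mem_sigma, mem_powerset, mem_powerset] at h
    obtain ⟨hB, hS⟩ := h
    have hd : Disjoint B S := (subset_sdiff.mp hS).2.symm
    simp [union_sdiff_cancel_left hd]

private lemma core {m : ℕ} (q : Fin m → ℝ) (T : Finset (Fin m)) :
    ∑ B ∈ T.powerset, ((∏ z ∈ B, q z) * ∏ z ∈ T \ B, (1 - q z)) * (1 / ((B.card : ℝ) + 1))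
      = ∑ C ∈ T.powerset, (-1) ^ C.card * (1 / ((C.card : ℝ) + 1)) * ∏ z ∈ C, q z := by
  have expand : ∀ s : Finset (Fin m),
      ∏ z ∈ s, (1 - q z) = ∑ S ∈ s.powerset, (-1) ^ S.card * ∏ z ∈ S, q z := by
    intro s
    have h1 : ∏ z ∈ s, (1 - q z) = ∏ z ∈ s, (-q z + 1) := prod_congr rfl fun z _ => by ring
    rw [h1, prod_add]
    refine sum_congr rfl fun S _ => ?_
    have : ∏ z ∈ S, (-q z) = (-1) ^ S.card * ∏ z ∈ S, q z := by
      calc ∏ z ∈ S, (-q z) = ∏ z ∈ S, ((-1) * q z) := prod_congr rfl fun z _ => by ring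
        _ = (∏ _z ∈ S, (-1 : ℝ)) * ∏ z ∈ S, q z := prod_mul_distrib
        _ = (-1) ^ S.card * ∏ z ∈ S, q z := by rw [prod_const]
    rw [this, prod_const_one, mul_one]
  calc ∑ B ∈ T.powerset, ((∏ z ∈ B, q z) * ∏ z ∈ T \ B, (1 - q z)) * (1 / ((B.card : ℝ) + 1))
      = ∑ B ∈ T.powerset, ∑ S ∈ (T \ B).powerset,
          ((∏ z ∈ B, q z) * ((-1) ^ S.card * ∏ z ∈ S, q z)) * (1 / ((B.card : ℝ) + 1)) := by
        refine sum_congr rfl fun B _ => ?_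
        rw [expand, mul_sum, sum_mul]
    _ = ∑ C ∈ T.powerset, ∑ B ∈ C.powerset,
          ((∏ z ∈ B, q z) * ((-1) ^ (C \ B).card * ∏ z ∈ C \ B, q z)) * (1 / ((B.card : ℝ) + 1)) :=
        pairSwap T _
    _ = ∑ C ∈ T.powerset, (-1) ^ C.card * (1 / ((C.card : ℝ) + 1)) * ∏ z ∈ C, q z := by
        refine sum_congr rfl fun C hC => ?_
        rw [mem_powerset] at hC
        have h2 : ∀ B ∈ C.powerset,
            ((∏ z ∈ B, q z) * ((-1) ^ (C \ B).card * ∏ z ∈ C \ B, q z)) * (1 / ((B.card : ℝ) + 1))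
              = (∏ z ∈ C, q z) * ((-1) ^ (C.card - B.card) * (1 / ((B.card : ℝ) + 1))) := by
          intro B hB
          rw [mem_powerset] at hB
          rw [card_sdiff_of_subset hB]
          have h3 : (∏ z ∈ B, q z) * ∏ z ∈ C \ B, q z = ∏ z ∈ C, q z := by
            rw [mul_comm]; exact prod_sdiff hB
          calc ((∏ z ∈ B, q z) * ((-1) ^ (C.card - B.card) * ∏ z ∈ C \ B, q z)) * (1 / ((B.card : ℝ) + 1))
              = ((∏ z ∈ B, q z) * ∏ z ∈ C \ B, q z) * ((-1) ^ (C.card - B.card) * (1 / ((B.card : ℝ) + 1))) := by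
                ring
            _ = (∏ z ∈ C, q z) * ((-1) ^ (C.card - B.card) * (1 / ((B.card : ℝ) + 1))) := by rw [h3]
        rw [sum_congr rfl h2, ← mul_sum]
        have h4 : ∑ B ∈ C.powerset, ((-1 : ℝ) ^ (C.card - B.card) * (1 / ((B.card : ℝ) + 1)))
            = (-1) ^ C.card * (1 / ((C.card : ℝ) + 1)) := by
          rw [sum_powerset_apply_card (fun b => ((-1 : ℝ)) ^ (C.card - b) * (1 / ((b : ℝ) + 1)))]
          have h5 : ∀ b ∈ range (C.card + 1),
              (C.card.choose b) • (((-1 : ℝ)) ^ (C.card - b) * (1 / ((b : ℝ) + 1)))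
                = (C.card.choose b : ℝ) * ((-1) ^ (C.card - b) * (1 / ((b : ℝ) + 1))) := by
            intro b _; rw [nsmul_eq_mul]
          rw [sum_congr rfl h5, altBinom]
        rw [h4]; ring

private lemma rhsBracket (m : ℕ) (hm : 1 ≤ m) (p : Fin m → ℝ) (i : Fin m) :
    ∑ C ∈ (Finset.univ.erase i).powerset,
        (-1 : ℝ) ^ C.card * (1 / ((C.card : ℝ) + 1)) * ∏ z ∈ C, p z
      = 1 + ∑ j ∈ Finset.Icc 2 m, (-1 : ℝ) ^ (j + 1) * (1 / (j : ℝ)) *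
          ∑ S ∈ (Finset.univ.erase i).powerset.filter (fun S => S.card = j - 1), ∏ z ∈ S, p z := by
  set T := Finset.univ.erase i with hT
  have hcard : T.card = m - 1 := by
    rw [hT, card_erase_of_mem (mem_univ i), card_univ, Fintype.card_fin]
  rw [sum_powerset, hcard]
  have hm' : m - 1 + 1 = m := Nat.succ_pred_eq_of_pos hm
  rw [hm']
  obtain ⟨m', rfl⟩ : ∃ m', m = m' + 1 := ⟨m - 1, (Nat.succ_pred_eq_of_pos hm).symm⟩
  rw [sum_range_succ']
  have h0 : ∑ C ∈ powersetCard 0 T,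
      (-1 : ℝ) ^ C.card * (1 / ((C.card : ℝ) + 1)) * ∏ z ∈ C, p z = 1 := by
    rw [powersetCard_zero, sum_singleton]
    simp
  rw [h0, add_comm]
  congr 1
  rw [← Finset.Ico_add_one_right_eq_Icc, sum_Ico_eq_sum_range]
  have hrange : m' + 1 + 1 - 2 = m' := by omega
  rw [hrange]
  refine sum_congr rfl fun k hk => ?_
  have hinner : ∀ C ∈ powersetCard (k + 1) T,
      (-1 : ℝ) ^ C.card * (1 / ((C.card : ℝ) + 1)) * ∏ z ∈ C, p z
        = (-1 : ℝ) ^ (k + 1) * (1 / ((k : ℝ) + 2)) * ∏ z ∈ C, p z := by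
    intro C hC
    rw [(mem_powersetCard.mp hC).2]
    push_cast; ring_nf
  rw [sum_congr rfl hinner, ← mul_sum]
  have hfilter : T.powerset.filter (fun S => S.card = 2 + k - 1) = powersetCard (k + 1) T := by
    rw [powersetCard_eq_filter]
    congr 1
    funext S
    congr 1
    omega
  rw [hfilter]
  push_cast
  ring_nf

/-- The expected average of the active clients' vectors equals the
inclusion–exclusion expression (key identity in Proposition 1). -/
theorem expected_active_average
    (m d : ℕ) (hm : 1 ≤ m) (p : Fin m → ℝ)
    (hp : ∀ i, 0 ≤ p i ∧ p i ≤ 1)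
    (u : Fin m → EuclideanSpace ℝ (Fin d)) :
    ∑ A ∈ Finset.univ.filter (fun A : Finset (Fin m) => A ≠ ∅),
      ((∏ i ∈ A, p i) * ∏ i ∈ Aᶜ, (1 - p i)) •
        ((1 / (A.card : ℝ)) • ∑ i ∈ A, u i)
    = ∑ i, (p i * (1 + ∑ j ∈ Finset.Icc 2 m,
        (-1 : ℝ) ^ (j + 1) * (1 / (j : ℝ)) *
          ∑ S ∈ (Finset.univ.erase i).powerset.filter (fun S => S.card = j - 1),
            ∏ z ∈ S, p z)) • u i := by
  set w : Finset (Fin m) → ℝ := fun A => (∏ i ∈ A, p i) * ∏ i ∈ Aᶜ, (1 - p i) with hw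
  have step1 : ∀ A : Finset (Fin m),
      w A • ((1 / (A.card : ℝ)) • ∑ i ∈ A, u i)
        = ∑ i : Fin m, (if i ∈ A then w A * (1 / (A.card : ℝ)) else 0) • u i := by
    intro A
    rw [smul_smul, smul_sum]
    symm
    calc ∑ i : Fin m, (if i ∈ A then w A * (1 / (A.card : ℝ)) else 0) • u i
        = ∑ i : Fin m, (if i ∈ A then (w A * (1 / (A.card : ℝ))) • u i else 0) := by
          refine sum_congr rfl fun j _ => ?_
          split <;> simp
      _ = ∑ i ∈ A, (w A * (1 / (A.card : ℝ))) • u i := by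
          rw [sum_ite_mem, univ_inter]
  have step2 :
      ∑ A ∈ Finset.univ.filter (fun A : Finset (Fin m) => A ≠ ∅),
          w A • ((1 / (A.card : ℝ)) • ∑ i ∈ A, u i)
        = ∑ A : Finset (Fin m), ∑ i : Fin m,
            (if i ∈ A then w A * (1 / (A.card : ℝ)) else 0) • u i := by
    rw [sum_congr rfl fun A _ => step1 A]
    refine sum_subset (filter_subset _ _) ?_
    intro A _ hA
    simp only [mem_filter, mem_univ, true_and, not_not] at hA
    subst hA
    simp
  rw [step2, sum_comm]
  refine sum_congr rfl fun i _ => ?_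
  rw [← sum_smul]
  congr 1
  -- scalar identity
  rw [← sum_filter]
  have hbij :
      ∑ A ∈ Finset.univ.filter (fun A : Finset (Fin m) => i ∈ A), w A * (1 / (A.card : ℝ))
        = ∑ B ∈ (Finset.univ.erase i).powerset, w (insert i B) * (1 / ((insert i B).card : ℝ)) := by
    refine sum_nbij' (fun A => A.erase i) (fun B => insert i B) ?_ ?_ ?_ ?_ ?_
    · intro A hA
      rw [mem_powerset]
      exact erase_subset_erase i (subset_univ A)
    · intro B hB
      simp [mem_filter]
    · intro A hA
      rw [mem_filter] at hA
      exact insert_erase hA.2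
    · intro B hB
      rw [mem_powerset] at hB
      have hiB : i ∉ B := fun h => (mem_erase.mp (hB h)).1 rfl
      exact erase_insert hiB
    · intro A hA
      rw [mem_filter] at hA
      rw [insert_erase hA.2]
  rw [hbij]
  have hterm : ∀ B ∈ (Finset.univ.erase i).powerset,
      w (insert i B) * (1 / ((insert i B).card : ℝ))
        = p i * (((∏ z ∈ B, p z) * ∏ z ∈ (Finset.univ.erase i) \ B, (1 - p z))
            * (1 / ((B.card : ℝ) + 1))) := by
    intro B hB
    rw [mem_powerset] at hB
    have hiB : i ∉ B := fun h => (mem_erase.mp (hB h)).1 rfl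
    have hc : ((insert i B).card : ℝ) = (B.card : ℝ) + 1 := by
      rw [card_insert_of_notMem hiB]; push_cast; ring
    have hcompl : (insert i B)ᶜ = (Finset.univ.erase i) \ B := by
      ext x
      simp only [mem_compl, mem_insert, mem_sdiff, mem_erase, mem_univ, and_true, true_and]
      tauto
    rw [hw]
    simp only [prod_insert hiB, hcompl, hc]
    ring
  rw [sum_congr rfl hterm, ← mul_sum, core, rhsBracket m hm p i]
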